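/- Let P be a monic polynomial of degree p over a field K of characteristic 0 with root multiset P (elements indexed (x_i, j), 0 ≤ j < μ_i). For any k-element sub-multiset K ⊂_k P (with induced order): (1) V[K‖(P∖K)] = (−1)^{k(p−k)} · s_K · V[P] ≠ 0, where s_K is the signature of the permutation putting P in the order (P∖K)‖K; and (2) for any other k-element sub-multiset K' ≠ K, V[K'‖(P∖K)] = 0. -/

import Mathlib

noncomputable section

open Polynomial Finset

variable {R : Type*} [CommRing R]

/-- Hermite-derivated Vandermonde column: entry in row `r` of the column attached to
the pair `(z, j)` is `(1/j!)·dʲ/dzʲ zʳ = C(r,j)·z^(r-j)`. -/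
def hcol (n : ℕ) (zj : R × ℕ) : Fin n → R :=
  fun r => ((r : ℕ).choose zj.2 : R) * zj.1 ^ ((r : ℕ) - zj.2)

/-- Generalized (confluent) Vandermonde determinant of a list of
(point, derivation order) pairs. -/
def gvd (l : List (R × ℕ)) : R :=
  (Matrix.of fun i j : Fin l.length => hcol l.length (l.get j) i).det

/-- View a list of ring elements as underivated column data. -/
def plain (l : List R) : List (R × ℕ) := l.map (fun x => (x, 0))

/-- `Pi2 A B = ∏_{x ∈ A, y ∈ B} (x - y)`. -/
def Pi2 (A B : List R) : R := (A.map fun x => (B.map fun y => x - y).prod).prod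

/-- The ordered sublist of values of `f` indexed by a finite set of positions. -/
def subL {α : Type*} {n : ℕ} (f : Fin n → α) (S : Finset (Fin n)) : List α :=
  (S.sort (· ≤ ·)).map f

/-- The list enumerating first the complement of `S` in increasing order,
then `S` in increasing order. -/
def splitList {n : ℕ} (S : Finset (Fin n)) : List (Fin n) :=
  (Sᶜ.sort (· ≤ ·)) ++ (S.sort (· ≤ ·))

lemma splitList_length {n : ℕ} (S : Finset (Fin n)) : (splitList S).length = n := by
  have h : S.card ≤ n := le_trans (Finset.card_le_univ S) (by simp)
  simp [splitList, Finset.card_compl]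
  omega

lemma splitList_nodup {n : ℕ} (S : Finset (Fin n)) : (splitList S).Nodup := by
  refine List.Nodup.append (Finset.sort_nodup _ _) (Finset.sort_nodup _ _) ?_
  intro a ha hb
  rw [Finset.mem_sort] at ha hb
  exact (Finset.mem_compl.mp ha) hb

/-- The permutation of `Fin n` sending `i` to the `i`-th element of the list
`(Sᶜ sorted) ++ (S sorted)`. -/
def splitPerm {n : ℕ} (S : Finset (Fin n)) : Equiv.Perm (Fin n) :=
  Equiv.ofBijective (fun i => (splitList S).get (finCongr (splitList_length S).symm i))
    (Finite.injective_iff_bijective.mp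
      (fun i j h => (finCongr (splitList_length S).symm).injective
        (List.nodup_iff_injective_get.mp (splitList_nodup S) h)))

/-- The signature `s_S` of the permutation putting the ambient ordered set in the
order (complement of S)‖S. -/
def sgnK {n : ℕ} (S : Finset (Fin n)) : ℤ := Equiv.Perm.sign (splitPerm S)

/-- `V[L‖U)` : generalized Vandermonde determinant over `K[U]` of derivated columns
given by `l` followed by the plain column of the variable `U`. -/
def gvdU {K : Type*} [Field K] (l : List (K × ℕ)) : Polynomial K :=
  gvd ((l.map fun zj => (Polynomial.C zj.1, zj.2)) ++ [(Polynomial.X, (0:ℕ))])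

/-- Multivariate version: `V[l‖U₁‖…‖U_u)`. -/
def gvdMU {K : Type*} [Field K] (u : ℕ) (l : List (K × ℕ)) : MvPolynomial (Fin u) K :=
  gvd ((l.map fun zj => (MvPolynomial.C zj.1, zj.2)) ++
    (List.finRange u).map (fun i => (MvPolynomial.X i, (0:ℕ))))

/-- The multivariate Vandermonde polynomial `∏_{i < j} (U_j - U_i)`. -/
def mvVandermonde (K : Type*) [Field K] (u : ℕ) : MvPolynomial (Fin u) K :=
  ∏ j : Fin u, ∏ i ∈ Finset.Iio j, (MvPolynomial.X j - MvPolynomial.X i)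

/-- The ordered root multiset attached to distinct roots `x i` with
multiplicities `μ i`. -/
def rootList {K : Type*} (x : Fin m → K) (μ : Fin m → ℕ) : List (K × ℕ) :=
  (List.finRange m).flatMap (fun i => (List.range (μ i)).map (fun j => (x i, j)))

/-- The generalized Sylvester double sum `Sylv^{k,ℓ}` of two monic polynomials
given by their root multisets `Pl` and `Ql`. -/
def sylv {K : Type*} [Field K] (Pl Ql : List (K × ℕ)) (k l : ℕ) : Polynomial K :=
  Polynomial.C ((gvd Pl * gvd Ql)⁻¹) *
    ∑ S ∈ Finset.powersetCard k (Finset.univ : Finset (Fin Pl.length)),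
      ∑ T ∈ Finset.powersetCard l (Finset.univ : Finset (Fin Ql.length)),
        (sgnK S * sgnK T) •
          (Polynomial.C (gvd (subL Ql.get Tᶜ ++ subL Pl.get Sᶜ)) *
            gvdU (subL Ql.get T ++ subL Pl.get S))

/-- `MSylv^{k,ℓ}(P,Q)(U) · V(U)` : the multi Sylvester double sum multiplied by the
ordinary Vandermonde determinant of the block `U` of `u` indeterminates. -/
def msylvV {K : Type*} [Field K] (Pl Ql : List (K × ℕ)) (k l u : ℕ) :
    MvPolynomial (Fin u) K :=
  MvPolynomial.C ((gvd Pl * gvd Ql)⁻¹) *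
    ∑ S ∈ Finset.powersetCard k (Finset.univ : Finset (Fin Pl.length)),
      ∑ T ∈ Finset.powersetCard l (Finset.univ : Finset (Fin Ql.length)),
        (sgnK S * sgnK T) •
          (MvPolynomial.C (gvd (subL Ql.get Tᶜ ++ subL Pl.get Sᶜ)) *
            gvdMU u (subL Ql.get T ++ subL Pl.get S))

/-- The ordered root multiset of a polynomial over an algebraically closed field. -/
def rootListOf {K : Type*} [Field K] (P : Polynomial K) : List (K × ℕ) :=
  letI := Classical.decEq K
  P.roots.toFinset.toList.flatMap
    (fun z => (List.range (P.rootMultiplicity z)).map (fun j => (z, j)))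

/-- The Sylvester double sum of two not-necessarily-monic polynomials. -/
def sylvP {K : Type*} [Field K] (P Q : Polynomial K) (k l : ℕ) : Polynomial K :=
  Polynomial.C (P.leadingCoeff ^ (Q.natDegree - (k + l)) *
      Q.leadingCoeff ^ (P.natDegree - (k + l))) *
    sylv (rootListOf P) (rootListOf Q) k l

/-- Rows of the Sylvester–Habicht matrix at level `j`:
`X^{q-j-1}P, …, P, Q, X Q, …, X^{p-j-1}Q`. -/
def sylvHabRow {K : Type*} [Field K] (P Q : Polynomial K) (j i : ℕ) : Polynomial K :=
  if i < Q.natDegree - j then Polynomial.X ^ (Q.natDegree - j - 1 - i) * P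
  else Polynomial.X ^ (i - (Q.natDegree - j)) * Q

/-- The `j`-th subresultant polynomial of `P` and `Q`, as the polynomial determinant
of the Sylvester–Habicht matrix at level `j`. -/
def Sres {K : Type*} [Field K] (P Q : Polynomial K) (j : ℕ) : Polynomial K :=
  (Matrix.of fun i c : Fin (P.natDegree + Q.natDegree - 2 * j) =>
    if (c : ℕ) < P.natDegree + Q.natDegree - 2 * j - 1 then
      Polynomial.C ((sylvHabRow P Q j i).coeff (P.natDegree + Q.natDegree - j - 1 - c))
    else
      ∑ t ∈ Finset.range (j + 1),
        Polynomial.C ((sylvHabRow P Q j i).coeff t) * Polynomial.X ^ t).det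

/-- Iterated normalized Hermite derivation of a multivariate polynomial: for each
variable `i`, apply `(1/(c i).2!)·∂^{(c i).2}/∂X_i^{(c i).2}`. -/
def hderiv {K : Type*} [Field K] {n : ℕ} (c : Fin n → K × ℕ)
    (f : MvPolynomial (Fin n) K) : MvPolynomial (Fin n) K :=
  (List.finRange n).foldl
    (fun g i => (((c i).2.factorial : K)⁻¹) • ((MvPolynomial.pderiv i)^[(c i).2] g)) f

/-- Hermite evaluation: apply the normalized derivations prescribed by `c` and
then substitute the points prescribed by `c`. -/
def hermiteEval {K : Type*} [Field K] {n : ℕ} (c : Fin n → K × ℕ)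
    (f : MvPolynomial (Fin n) K) : K :=
  MvPolynomial.eval (fun i => (c i).1) (hderiv c f)


set_option linter.unusedSectionVars false
set_option linter.unusedVariables false

section Aux
set_option linter.unusedSectionVars false
variable {K : Type*} [Field K] {m : ℕ} (x : Fin m → K) (μ : Fin m → ℕ)

lemma rootList_length : (rootList x μ).length = ∑ i, μ i := by
  simp [rootList, List.length_flatMap, Function.comp_def, ← List.ofFn_eq_map, List.sum_ofFn]

lemma rootList_mem {z : K} {j : ℕ} :
    (z, j) ∈ rootList x μ ↔ ∃ i, x i = z ∧ j < μ i := by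
  simp only [rootList, List.mem_flatMap, List.mem_map, List.mem_range]
  constructor
  · rintro ⟨i, -, j', hj', hEq⟩
    injection hEq with h1 h2
    exact ⟨i, h1, h2 ▸ hj'⟩
  · rintro ⟨i, rfl, h⟩
    exact ⟨i, List.mem_finRange i, j, h, rfl⟩

lemma rootList_nodup (hx : Function.Injective x) : (rootList x μ).Nodup := by
  rw [rootList, List.nodup_flatMap]
  constructor
  · intro i _
    exact (List.nodup_range).map (fun a b h => by injection h)
  · refine List.Pairwise.imp ?_ (List.nodup_finRange m)
    intro a b hab
    simp only [Function.onFun, List.disjoint_left]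
    rintro ⟨z, j⟩ hz hz'
    simp only [List.mem_map, List.mem_range, Prod.mk.injEq] at hz hz'
    obtain ⟨j₁, -, h1, -⟩ := hz
    obtain ⟨j₂, -, h2, -⟩ := hz'
    exact hab (hx (h1.trans h2.symm))

end Aux


lemma gvd_reindex {l l' : List (R × ℕ)} (hlen : l'.length = l.length)
    (σ : Equiv.Perm (Fin l.length))
    (h : ∀ i : Fin l'.length, l'.get i = l.get (σ (Fin.cast hlen i))) :
    gvd l' = ((Equiv.Perm.sign σ : ℤ) : R) * gvd l := by
  unfold gvd
  have hM : (Matrix.of fun i j : Fin l'.length => hcol l'.length (l'.get j) i)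
      = ((Matrix.of fun i j : Fin l.length => hcol l.length (l.get j) i).submatrix
          id σ).submatrix (finCongr hlen) (finCongr hlen) := by
    ext i j
    have hj := h j
    simp only [List.get_eq_getElem] at hj
    simp [Matrix.submatrix_apply, hcol, hj]
  rw [hM, Matrix.det_submatrix_equiv_self, Matrix.det_permute']

lemma gvd_eq_zero_of_dup {l : List (R × ℕ)} {i j : Fin l.length} (hij : i ≠ j)
    (h : l.get i = l.get j) : gvd l = 0 :=
  Matrix.det_zero_of_column_eq hij (fun k => by
    simp only [List.get_eq_getElem] at h; simp [h])

lemma gvd_dup_zero {l : List (R × ℕ)} (S' T : Finset (Fin l.length)) (a : Fin l.length)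
    (ha1 : a ∈ S') (ha2 : a ∈ T) :
    gvd (subL l.get S' ++ subL l.get T) = 0 := by
  obtain ⟨i₁, hi₁, e₁⟩ := List.mem_iff_getElem.mp ((Finset.mem_sort (· ≤ ·)).mpr ha1)
  obtain ⟨i₂, hi₂, e₂⟩ := List.mem_iff_getElem.mp ((Finset.mem_sort (· ≤ ·)).mpr ha2)
  set A := subL l.get S' ++ subL l.get T with hA
  have hlen1 : (subL l.get S').length = (S'.sort (· ≤ ·)).length := by simp [subL]
  have hlen2 : (subL l.get T).length = (T.sort (· ≤ ·)).length := by simp [subL]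
  have hp1 : i₁ < A.length := by
    simp only [hA, List.length_append]; omega
  have hp2 : (subL l.get S').length + i₂ < A.length := by
    simp only [hA, List.length_append]; omega
  refine gvd_eq_zero_of_dup (i := ⟨i₁, hp1⟩) (j := ⟨(subL l.get S').length + i₂, hp2⟩)
    (by intro hc; have := congrArg Fin.val hc; simp at this; omega) ?_
  simp only [List.get_eq_getElem]
  rw [List.getElem_append_left (by omega), List.getElem_append_right (by omega)]
  simp only [subL, List.getElem_map, hlen1]
  simp only [Nat.add_sub_cancel_left, e₁, e₂]

open Fin.NatCast in
lemma rot_pow_apply {n : ℕ} [NeZero n] (t : ℕ) (i : Fin n) :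
    ((finRotate n)^t) i = i + (t : Fin n) := by
  obtain ⟨n', rfl⟩ := Nat.exists_eq_succ_of_ne_zero (NeZero.ne n)
  induction t with
  | zero => simp
  | succ t ih =>
    rw [pow_succ', Equiv.Perm.mul_apply, finRotate_succ_apply, ih]
    push_cast
    rw [add_assoc]

lemma sign_rot {n : ℕ} (hn : n ≠ 0) (t : ℕ) :
    Equiv.Perm.sign ((finRotate n)^t) = (-1 : ℤˣ)^((n-1)*t) := by
  obtain ⟨n', rfl⟩ := Nat.exists_eq_succ_of_ne_zero hn
  rw [map_pow, sign_finRotate, ← pow_mul]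

lemma parity_aux {n c : ℕ} (hn : n ≠ 0) (hc : c ≤ n) :
    Even ((n-1)*(n-c)) ↔ Even (c*(n-c)) := by
  obtain ⟨n', rfl⟩ := Nat.exists_eq_succ_of_ne_zero hn
  rcases Nat.even_or_odd (n'+1-c) with he | ho
  · simp [Nat.even_mul, he]
  · have h2 : Even (n'+1-c) ↔ (Even (n'+1) ↔ Even c) := Nat.even_sub hc
    rw [← Nat.not_even_iff_odd] at ho
    rw [Nat.even_add_one] at h2
    simp only [Nat.even_mul, Nat.add_sub_cancel]
    tauto

lemma neg_one_pow_congr_aux {a b : ℕ} (h : Even a ↔ Even b) : (-1 : R)^a = (-1 : R)^b := by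
  rcases Nat.even_or_odd a with he | ho
  · rw [Even.neg_one_pow he, Even.neg_one_pow (h.mp he)]
  · have hb : Odd b := by
      rw [← Nat.not_even_iff_odd] at ho ⊢; tauto
    rw [Odd.neg_one_pow ho, Odd.neg_one_pow hb]

lemma gvd_split_sign {l : List (R × ℕ)} (S : Finset (Fin l.length)) :
    gvd (subL l.get S ++ subL l.get Sᶜ) =
      (-1 : R) ^ (S.card * (l.length - S.card)) * (sgnK S : R) * gvd l := by
  by_cases hl0 : l.length = 0
  · have hS : S = ∅ := Finset.eq_empty_of_forall_notMem (fun a _ => absurd a.2 (by omega))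
    have h1 : splitPerm S = 1 := Equiv.ext (fun a => absurd a.2 (by omega))
    have hA : subL l.get S ++ subL l.get Sᶜ = [] := by
      apply List.eq_nil_of_length_eq_zero
      have h1 := Finset.card_le_univ S
      have h2 := Finset.card_le_univ Sᶜ
      simp only [Finset.card_univ, Fintype.card_fin, hl0, Nat.le_zero] at h1 h2
      simp only [List.length_append, subL, List.length_map, Finset.length_sort, h1, h2]
    have hl : l = [] := List.eq_nil_of_length_eq_zero hl0
    subst hl
    rw [hA]
    rw [hS] at h1
    simp [gvd, sgnK, h1, hS, Matrix.det_isEmpty]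
  · haveI : NeZero l.length := ⟨hl0⟩
    have hkn : S.card ≤ l.length := by
      have := Finset.card_le_univ S; simpa using this
    have hks : (S.sort (· ≤ ·)).length = S.card := Finset.length_sort _
    have hks' : (Sᶜ.sort (· ≤ ·)).length = l.length - S.card := by
      rw [Finset.length_sort, Finset.card_compl]; simp
    have hlen : (subL l.get S ++ subL l.get Sᶜ).length = l.length := by
      simp only [subL, List.length_append, List.length_map, hks, hks']
      omega
    set σ : Equiv.Perm (Fin l.length) :=
      splitPerm S * (finRotate l.length)^(l.length - S.card) with hσdef
    have h : ∀ i : Fin (subL l.get S ++ subL l.get Sᶜ).length,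
        (subL l.get S ++ subL l.get Sᶜ).get i = l.get (σ (Fin.cast hlen i)) := by
      intro i
      have hi : (i : ℕ) < l.length := by have := i.2; omega
      set j : Fin l.length := (finRotate l.length ^ (l.length - S.card)) (Fin.cast hlen i) with hj
      have hjval : (j : ℕ) = ((i : ℕ) + (l.length - S.card) % l.length) % l.length := by
        rw [hj, rot_pow_apply, Fin.add_def, Fin.val_natCast]
        simp
      have hσ : σ (Fin.cast hlen i) =
          (splitList S).get (finCongr (splitList_length S).symm j) := rfl
      have hAg : (subL l.get S ++ subL l.get Sᶜ).get i =
          l.get (((S.sort (· ≤ ·)) ++ (Sᶜ.sort (· ≤ ·)))[(i : ℕ)]'(by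
            simp only [List.length_append, hks, hks']; omega)) := by
        rw [List.get_eq_getElem, List.get_eq_getElem]
        simp only [subL, ← List.map_append, List.getElem_map]
        rfl
      rw [hAg, hσ]
      congr 1
      simp only [List.get_eq_getElem, finCongr_apply, Fin.coe_cast]
      simp only [splitList]
      by_cases hik : (i : ℕ) < S.card
      · have hk0 : 0 < S.card := by omega
        have hjv : (j : ℕ) = (i : ℕ) + (l.length - S.card) := by
          rw [hjval, Nat.mod_eq_of_lt (show l.length - S.card < l.length by omega),
            Nat.mod_eq_of_lt (show (i : ℕ) + (l.length - S.card) < l.length by omega)]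
        rw [List.getElem_append_left (by omega),
          List.getElem_append_right (by rw [hks']; omega)]
        exact getElem_congr_idx (by rw [hks']; omega)
      · have hjv : (j : ℕ) = (i : ℕ) - S.card := by
          rcases Nat.eq_zero_or_pos S.card with hk0 | hk0
          · rw [hjval, hk0]
            simp [Nat.mod_self, Nat.mod_eq_of_lt hi]
          · rw [hjval, Nat.mod_eq_of_lt (show l.length - S.card < l.length by omega)]
            have he : (i : ℕ) + (l.length - S.card) = ((i : ℕ) - S.card) + l.length := by omega
            rw [he, Nat.add_mod_right, Nat.mod_eq_of_lt (by omega)]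
        rw [List.getElem_append_right (by omega),
          List.getElem_append_left (by rw [hks']; omega)]
        exact getElem_congr_idx (by rw [hks]; omega)
    have hmain := gvd_reindex hlen σ h
    rw [hmain]
    have hsig : Equiv.Perm.sign σ =
        Equiv.Perm.sign (splitPerm S) * (-1 : ℤˣ)^((l.length-1)*(l.length-S.card)) := by
      rw [hσdef, map_mul, sign_rot hl0]
    have hpar : (-1 : R)^((l.length-1)*(l.length-S.card)) = (-1 : R)^(S.card*(l.length-S.card)) :=
      neg_one_pow_congr (parity_aux hl0 hkn)
    rw [hsig, sgnK]
    push_cast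
    rw [hpar]
    ring


section Taylor
variable {K : Type*} [Field K]

lemma taylor_factor (z : K) (h : K[X]) (m : ℕ) :
    (Polynomial.taylor z) ((X - C z)^m * h) = X^m * (Polynomial.taylor z) h := by
  simp only [taylor_apply, mul_comp, pow_comp, sub_comp, X_comp, C_comp, add_sub_cancel_right]

lemma taylor_factor_coeff_lt (z : K) (h : K[X]) {m t : ℕ} (ht : t < m) :
    ((Polynomial.taylor z) ((X - C z)^m * h)).coeff t = 0 := by
  rw [taylor_factor, mul_comm, coeff_mul_X_pow', if_neg (by omega)]

lemma taylor_factor_coeff_eq (z : K) (h : K[X]) (m : ℕ) :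
    ((Polynomial.taylor z) ((X - C z)^m * h)).coeff m = h.eval z := by
  rw [taylor_factor, mul_comm, coeff_mul_X_pow', if_pos le_rfl, Nat.sub_self, taylor_coeff_zero]

lemma taylor_monomial_coeff (z : K) (r t : ℕ) (c : K) :
    ((Polynomial.taylor z) (monomial r c)).coeff t = c * ((r.choose t : K) * z^(r - t)) := by
  rw [taylor_coeff, hasseDeriv_monomial, eval_monomial]
  ring

lemma gvd_rootList_ne_zero {m : ℕ} (x : Fin m → K) (μ : Fin m → ℕ)
    (hx : Function.Injective x) : gvd (rootList x μ) ≠ 0 := by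
  classical
  intro hdet
  set l := rootList x μ with hldef
  set p := l.length with hpdef
  rw [gvd] at hdet
  obtain ⟨v, hv0, hv⟩ := (Matrix.exists_mulVec_eq_zero_iff).mpr hdet
  -- data for each column
  have hmem : ∀ a : Fin p, ∃ i, x i = (l.get a).1 ∧ (l.get a).2 < μ i := by
    intro a
    have h1 : l.get a ∈ l := List.get_mem l a
    have h2 : ((l.get a).1, (l.get a).2) ∈ rootList x μ := by rwa [Prod.mk.eta]
    exact (rootList_mem x μ).mp h2
  choose idx hidx hltμ using hmem
  have hM : ∀ r : ℕ, r < p →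
      (∑ a : Fin p, v a * ((r.choose (l.get a).2 : K) * (l.get a).1 ^ (r - (l.get a).2))) = 0 := by
    intro r hr
    have h1 := congrFun hv ⟨r, hr⟩
    simp only [Matrix.mulVec, dotProduct, Matrix.of_apply, hcol, Pi.zero_apply] at h1
    rw [← h1]
    exact Finset.sum_congr rfl (fun a _ => by ring)
  have Lzero : ∀ f : K[X], f.natDegree < p →
      (∑ a : Fin p, v a * (((Polynomial.taylor (l.get a).1) f).coeff (l.get a).2)) = 0 := by
    intro f hf
    calc ∑ a : Fin p, v a * (((Polynomial.taylor (l.get a).1) f).coeff (l.get a).2)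
        = ∑ a : Fin p, ∑ r ∈ Finset.range p,
            v a * (f.coeff r * (((r.choose (l.get a).2 : K)) * (l.get a).1 ^ (r - (l.get a).2))) := by
          refine Finset.sum_congr rfl (fun a _ => ?_)
          conv_lhs => rw [as_sum_range' f p hf]
          rw [map_sum, finset_sum_coeff, Finset.mul_sum]
          exact Finset.sum_congr rfl (fun r _ => by rw [taylor_monomial_coeff])
      _ = ∑ r ∈ Finset.range p, f.coeff r *
            ∑ a : Fin p, v a * (((r.choose (l.get a).2 : K)) * (l.get a).1 ^ (r - (l.get a).2)) := by
          rw [Finset.sum_comm]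
          refine Finset.sum_congr rfl (fun r _ => ?_)
          rw [Finset.mul_sum]
          exact Finset.sum_congr rfl (fun a _ => by ring)
      _ = 0 := by
          refine Finset.sum_eq_zero (fun r hr => ?_)
          rw [hM r (Finset.mem_range.mp hr), mul_zero]
  -- test polynomials
  have hp_sum : p = ∑ i, μ i := rootList_length x μ
  set g : Fin m → ℕ → K[X] := fun i j =>
    (X - C (x i))^j * ∏ i' ∈ Finset.univ.erase i, (X - C (x i'))^(μ i') with hgdef
  have hmono : ∀ i j, (g i j).Monic := by
    intro i j
    exact ((monic_X_sub_C (x i)).pow j).mul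
      (monic_prod_of_monic _ _ (fun i' _ => (monic_X_sub_C (x i')).pow (μ i')))
  have hgdeg : ∀ i j, j < μ i → (g i j).natDegree < p := by
    intro i j hj
    rw [hgdef]
    rw [Monic.natDegree_mul ((monic_X_sub_C (x i)).pow j)
      (monic_prod_of_monic _ _ (fun i' _ => (monic_X_sub_C (x i')).pow (μ i')))]
    rw [natDegree_pow, natDegree_X_sub_C, mul_one, natDegree_prod_of_monic _ _
      (fun i' _ => (monic_X_sub_C (x i')).pow (μ i'))]
    have : ∑ i' ∈ Finset.univ.erase i, ((X - C (x i'))^(μ i')).natDegree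
        = ∑ i' ∈ Finset.univ.erase i, μ i' := by
      refine Finset.sum_congr rfl (fun i' _ => ?_)
      rw [natDegree_pow, natDegree_X_sub_C, mul_one]
    rw [this, hp_sum, ← Finset.add_sum_erase _ _ (Finset.mem_univ i)]
    omega
  have hnodup : l.Nodup := rootList_nodup x μ hx
  have hgetinj : Function.Injective l.get := List.nodup_iff_injective_get.mp hnodup
  -- the key coefficient value
  have hCi : ∀ i : Fin m,
      (∏ i' ∈ Finset.univ.erase i, (X - C (x i'))^(μ i')).eval (x i)
        = ∏ i' ∈ Finset.univ.erase i, (x i - x i')^(μ i') := by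
    intro i
    rw [eval_prod]
    exact Finset.prod_congr rfl (fun i' _ => by rw [eval_pow, eval_sub, eval_X, eval_C])
  have hCine : ∀ i : Fin m, (∏ i' ∈ Finset.univ.erase i, (x i - x i')^(μ i')) ≠ 0 := by
    intro i
    rw [Finset.prod_ne_zero_iff]
    intro i' hi'
    exact pow_ne_zero _ (sub_ne_zero.mpr (fun hc => (Finset.mem_erase.mp hi').1 (hx hc).symm))
  -- main induction
  have hvz : ∀ N : ℕ, ∀ a : Fin p, μ (idx a) - (l.get a).2 ≤ N → v a = 0 := by
    intro N
    induction N with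
    | zero => intro a ha; exact absurd ha (by have := hltμ a; omega)
    | succ N ih =>
      intro a ha
      have hL := Lzero (g (idx a) (l.get a).2) (hgdeg _ _ (hltμ a))
      rw [Finset.sum_eq_single a] at hL
      · -- hL : v a * coeff = 0
        simp only [hgdef] at hL
        rw [hidx a, taylor_factor_coeff_eq, ← hidx a, hCi] at hL
        exact (mul_eq_zero.mp hL).resolve_right (hCine (idx a))
      · intro b _ hb
        by_cases hib : idx b = idx a
        · rcases lt_trichotomy (l.get b).2 (l.get a).2 with hlt2 | heq | hgt
          · simp only [hgdef]
            have hzb : (l.get b).1 = x (idx a) := by rw [← hidx b, hib]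
            rw [← hzb, taylor_factor_coeff_lt _ _ hlt2, mul_zero]
          · exfalso
            apply hb
            apply hgetinj
            apply Prod.ext
            · rw [← hidx b, ← hidx a, hib]
            · exact heq
          · rw [ih b (by rw [hib]; omega), zero_mul]
        · simp only [hgdef]
          have hzb : (l.get b).1 = x (idx b) := (hidx b).symm
          rw [show ((X - C (x (idx a)))^(l.get a).2 *
              ∏ i' ∈ Finset.univ.erase (idx a), (X - C (x i'))^(μ i'))
            = (X - C ((l.get b).1))^(μ (idx b)) *
              ((X - C (x (idx a)))^(l.get a).2 *
               ∏ i' ∈ (Finset.univ.erase (idx a)).erase (idx b), (X - C (x i'))^(μ i')) from by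
            rw [hzb, ← Finset.mul_prod_erase _ _
              (Finset.mem_erase.mpr ⟨hib, Finset.mem_univ _⟩)]
            ring]
          rw [taylor_factor_coeff_lt _ _ (hltμ b), mul_zero]
      · intro ha'
        exact absurd (Finset.mem_univ a) ha'
  apply hv0
  funext a
  exact hvz (μ (idx a)) a (by omega)

end Taylor


/-- `V[K‖(P∖K)] = (−1)^{k(p−k)} s_K V[P] ≠ 0`, and
`V[K'‖(P∖K)] = 0` for any other `K'` of the same cardinality. -/
theorem gvd_split {K : Type*} [Field K] [CharZero K] {m k : ℕ}
    (x : Fin m → K) (μ : Fin m → ℕ) (hx : Function.Injective x)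
    (hμ : ∀ i, 0 < μ i)
    (S : Finset (Fin (rootList x μ).length)) (hS : S.card = k) :
    (gvd (subL (rootList x μ).get S ++ subL (rootList x μ).get Sᶜ) =
        (-1 : K) ^ (k * ((rootList x μ).length - k)) * (sgnK S : K) *
          gvd (rootList x μ) ∧
      gvd (subL (rootList x μ).get S ++ subL (rootList x μ).get Sᶜ) ≠ 0) ∧
    (∀ S' : Finset (Fin (rootList x μ).length), S'.card = k → S' ≠ S →
      gvd (subL (rootList x μ).get S' ++ subL (rootList x μ).get Sᶜ) = 0) := by
  have hnz : gvd (rootList x μ) ≠ 0 := gvd_rootList_ne_zero x μ hx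
  have h1 := gvd_split_sign (l := rootList x μ) S
  refine ⟨⟨by rw [h1, hS], ?_⟩, ?_⟩
  · rw [h1]
    refine mul_ne_zero (mul_ne_zero ?_ ?_) hnz
    · exact pow_ne_zero _ (neg_ne_zero.mpr one_ne_zero)
    · rcases Int.units_eq_one_or (Equiv.Perm.sign (splitPerm S)) with h | h <;>
        simp [sgnK, h]
  · intro S' hS' hne
    have hex : ∃ a, a ∈ S' ∧ a ∈ Sᶜ := by
      by_contra hc
      push_neg at hc
      apply hne
      apply Finset.eq_of_subset_of_card_le
      · intro a ha
        by_contra h2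
        exact hc a ha (Finset.mem_compl.mpr h2)
      · rw [hS, hS']
    obtain ⟨a, ha1, ha2⟩ := hex
    exact gvd_dup_zero S' Sᶜ a ha1 ha2

end
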